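/- For t ∈ ω^{<ω} let φ_t: K⁰_t → K¹_t be the homeomorphism flipping only the coordinate Σ_t = ⟨Σ^t_{|t|},0⟩, and set H̃_t := K⁰_t ∖ (⋃_{n: w_n(0)=0} K_{t⌢n} ∪ ⋃_{n: w_n(0)=1} φ_t^{-1}(K_{t⌢n})). Then the sets H̃_t ∪ φ_t[H̃_t], for t ranging over ω^{<ω}, are pairwise disjoint; moreover H_t ⊆ H̃_t, and hence the graph ⋃_t Gr(φ_t|_{H̃_t}) is the graph of a partial injection on 2^ω. -/
import Mathlib


/-- Triangular numbers. -/
def tri (m : ℕ) : ℕ := m * (m + 1) / 2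

/-- The pairing `⟨n,p⟩ := (Σ_{k ≤ n+p} k) + p`. -/
def pairN (n p : ℕ) : ℕ := tri (n + p) + p

/-- `Σ^t_k := Σ_{j<k} (t(j) + 2)`. -/
def sigT (t : List ℕ) (k : ℕ) : ℕ := ((t.take k).map (· + 2)).sum

lemma two_tri (s : ℕ) : 2 * tri s = s * (s + 1) := by
  have h : 2 ∣ s * (s + 1) := (Nat.even_mul_succ_self s).two_dvd
  unfold tri; omega

lemma tri_succ (s : ℕ) : tri (s + 1) = tri s + (s + 1) := by
  have h1 := two_tri s; have h2 := two_tri (s+1); nlinarith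

lemma tri_mono : Monotone tri := by
  have : ∀ s, tri s ≤ tri (s+1) := fun s => by rw [tri_succ]; omega
  exact monotone_nat_of_le_succ this

lemma pairN_inj {n p n' p' : ℕ} (h : pairN n p = pairN n' p') : n = n' ∧ p = p' := by
  have key : n + p = n' + p' := by
    by_contra hne
    rcases Nat.lt_or_ge (n + p) (n' + p') with hl | hg
    · have h1 : tri (n+p) + p < tri (n+p+1) := by rw [tri_succ]; omega
      have h2 : tri (n+p+1) ≤ tri (n'+p') := tri_mono hl
      simp only [pairN] at h; omega
    · have hl : n' + p' < n + p := by omega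
      have h1 : tri (n'+p') + p' < tri (n'+p'+1) := by rw [tri_succ]; omega
      have h2 : tri (n'+p'+1) ≤ tri (n+p) := tri_mono hl
      simp only [pairN] at h; omega
  simp only [pairN, key] at h; omega

lemma pairN_zero_ge (p : ℕ) : p ≤ pairN 0 p := by simp [pairN]

lemma sigT_append {t u : List ℕ} {k : ℕ} (h : k ≤ t.length) :
    sigT (t ++ u) k = sigT t k := by
  unfold sigT; rw [List.take_append_of_le_length h]

lemma getD_append {t u : List ℕ} {k : ℕ} (h : k < t.length) :
    (t ++ u).getD k 0 = t.getD k 0 := by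
  rw [List.getD_eq_getElem?_getD, List.getD_eq_getElem?_getD, List.getElem?_append_left h]

lemma getD_append_self {t : List ℕ} {n : ℕ} : (t ++ [n]).getD t.length 0 = n := by
  rw [List.getD_eq_getElem?_getD, List.getElem?_append_right (le_refl _)]
  simp

lemma sigT_succ {t : List ℕ} {k : ℕ} (h : k < t.length) :
    sigT t (k + 1) = sigT t k + (t.getD k 0 + 2) := by
  unfold sigT
  rw [List.take_succ]
  have h2 : t[k]? = some (t.getD k 0) := by
    rw [List.getD_eq_getElem?_getD, List.getElem?_eq_getElem h]; rfl
  rw [h2]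
  simp

lemma sigT_mono (t : List ℕ) : Monotone (sigT t) := by
  apply monotone_nat_of_le_succ
  intro k
  rcases Nat.lt_or_ge k t.length with h | h
  · rw [sigT_succ h]; omega
  · unfold sigT
    rw [List.take_of_length_le h, List.take_of_length_le (by omega)]

lemma sigT_lt {t : List ℕ} {k i : ℕ} (hk : k < t.length) (hi : i < t.getD k 0 + 2) :
    sigT t k + i < sigT t t.length := by
  have h1 := sigT_succ hk
  have h2 : sigT t (k+1) ≤ sigT t t.length := sigT_mono t hk
  omega


/-- The set `K_t ⊆ 2^ω`: for each `k < |t|`, the vertical slices numbered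
`Σ^t_k, …, Σ^t_k + t(k) + 1` are prescribed: the `i`-th of them is
`(w_{t(k)})_i · 0^∞`, except that the `0`-th one additionally carries a `1`
at position `t(k) + 1` (i.e. equals `(w_{t(k)})₀·0^{t(k)+1-|(w_{t(k)})₀|}·1·0^∞`). -/
def Kt (w : ℕ → List Bool) (t : List ℕ) : Set (ℕ → Bool) :=
  {α | ∀ k < t.length, ∀ i < t.getD k 0 + 2, ∀ p,
    α (pairN (sigT t k + i) p) =
      if i = 0 ∧ p = t.getD k 0 + 1 then true
      else (w (t.getD k 0)).getD (pairN i p) false}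

/-- The clopen piece `K^ε_t := {α ∈ K_t : α(⟨Σ^t_{|t|}, 0⟩) = ε}`. -/
def Keps (w : ℕ → List Bool) (t : List ℕ) (ε : Bool) : Set (ℕ → Bool) :=
  {α | α ∈ Kt w t ∧ α (pairN (sigT t t.length) 0) = ε}

/-- The homeomorphism `φ_t : K⁰_t → K¹_t`, flipping only the coordinate
`Σ_t = ⟨Σ^t_{|t|}, 0⟩`. -/
def phiT (t : List ℕ) (α : ℕ → Bool) : ℕ → Bool :=
  fun m => if m = pairN (sigT t t.length) 0 then !(α m) else α m

/-- `H̃_t := K⁰_t ∖ (⋃_{n : w_n(0)=0} K_{t⌢n} ∪ ⋃_{n : w_n(0)=1} φ_t⁻¹(K_{t⌢n}))`. -/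
def Htilde (w : ℕ → List Bool) (t : List ℕ) : Set (ℕ → Bool) :=
  Keps w t false \
    ((⋃ n ∈ {n : ℕ | (w n).getD 0 false = false}, Kt w (t ++ [n])) ∪
     (⋃ n ∈ {n : ℕ | (w n).getD 0 false = true}, phiT t ⁻¹' Kt w (t ++ [n])))

/-- `H_t := {α ∈ K⁰_t : (α)_{Σ^t_{|t|}} has infinitely many 1's}`. -/
def Ht (w : ℕ → List Bool) (t : List ℕ) : Set (ℕ → Bool) :=
  {α ∈ Keps w t false | ∀ n, ∃ p ≥ n, α (pairN (sigT t t.length) p) = true}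

lemma phiT_invol (t : List ℕ) (α : ℕ → Bool) : phiT t (phiT t α) = α := by
  funext m; unfold phiT; by_cases h : m = pairN (sigT t t.length) 0 <;> simp [h]

lemma phiT_apply_ne {t : List ℕ} {α : ℕ → Bool} {m : ℕ}
    (h : m ≠ pairN (sigT t t.length) 0) : phiT t α m = α m := by
  simp [phiT, h]

-- the constrained coordinates differ from the flip coordinate
lemma coord_ne {t : List ℕ} {k i p : ℕ} (hk : k < t.length) (hi : i < t.getD k 0 + 2) :
    pairN (sigT t k + i) p ≠ pairN (sigT t t.length) 0 := by
  intro h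
  have := (pairN_inj h).1
  have := sigT_lt hk hi
  omega

lemma phiT_mem_Kt {w : ℕ → List Bool} {t : List ℕ} {α : ℕ → Bool} (h : α ∈ Kt w t) :
    phiT t α ∈ Kt w t := by
  intro k hk i hi p
  rw [phiT_apply_ne (coord_ne hk hi)]
  exact h k hk i hi p

lemma Kt_append {w : ℕ → List Bool} (t u : List ℕ) : Kt w (t ++ u) ⊆ Kt w t := by
  intro α hα k hk i hi p
  have hk' : k < (t ++ u).length := by simp; omega
  have e1 : sigT (t ++ u) k = sigT t k := sigT_append (by omega)
  have e2 : (t ++ u).getD k 0 = t.getD k 0 := getD_append hk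
  have := hα k hk' i (by rw [e2]; exact hi) p
  rw [e1, e2] at this
  exact this

lemma mem_Kt_append_slice {w : ℕ → List Bool} {t : List ℕ} {n : ℕ} {α : ℕ → Bool}
    (h : α ∈ Kt w (t ++ [n])) (p : ℕ) :
    α (pairN (sigT t t.length) p) =
      if p = n + 1 then true else (w n).getD (pairN 0 p) false := by
  have hk : t.length < (t ++ [n]).length := by simp
  have e2 : (t ++ [n]).getD t.length 0 = n := getD_append_self
  have := h t.length hk 0 (by rw [e2]; omega) p
  rw [sigT_append (le_refl _), e2] at this
  simpa using this

lemma mem_Kt_append_flipcoord {w : ℕ → List Bool} {t : List ℕ} {n : ℕ} {α : ℕ → Bool}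
    (h : α ∈ Kt w (t ++ [n])) :
    α (pairN (sigT t t.length) 0) = (w n).getD 0 false := by
  have := mem_Kt_append_slice h 0
  simpa [pairN, tri] using this

lemma mem_Kt_append_fin {w : ℕ → List Bool} (hw : ∀ n, (w n).length = n + 1)
    {t : List ℕ} {n : ℕ} {α : ℕ → Bool} (h : α ∈ Kt w (t ++ [n])) {p : ℕ}
    (hp : n + 2 ≤ p) : α (pairN (sigT t t.length) p) = false := by
  rw [mem_Kt_append_slice h p, if_neg (by omega)]
  apply List.getD_eq_default
  have := pairN_zero_ge p
  rw [hw n]; omega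

-- slice clash for incompatible sequences
lemma slice_clash {w : ℕ → List Bool} (hw : ∀ n, (w n).length = n + 1)
    {α : ℕ → Bool} {S a b : ℕ}
    (ha : ∀ p, α (pairN S p) = if p = a + 1 then true else (w a).getD (pairN 0 p) false)
    (hb : ∀ p, α (pairN S p) = if p = b + 1 then true else (w b).getD (pairN 0 p) false)
    (hab : a ≠ b) : False := by
  have key : ∀ a b : ℕ, a < b →
      (∀ p, α (pairN S p) = if p = a + 1 then true else (w a).getD (pairN 0 p) false) →
      (∀ p, α (pairN S p) = if p = b + 1 then true else (w b).getD (pairN 0 p) false) →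
      False := by
    intro a b hlt ha hb
    have h1 := ha (b + 1)
    have h2 := hb (b + 1)
    rw [if_neg (by omega)] at h1
    rw [if_pos rfl] at h2
    rw [List.getD_eq_default _ _ (by have := pairN_zero_ge (b+1); rw [hw a]; omega)] at h1
    rw [h1] at h2; exact Bool.false_ne_true h2
  rcases Nat.lt_or_ge a b with h | h
  · exact key a b h ha hb
  · exact key b a (by omega) hb ha

lemma Kt_incomp {w : ℕ → List Bool} (hw : ∀ n, (w n).length = n + 1)
    {t t' : List ℕ} {k : ℕ} (hk : k < t.length) (hk' : k < t'.length)
    (htake : t.take k = t'.take k) (hgetD : t.getD k 0 ≠ t'.getD k 0) :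
    Disjoint (Kt w t) (Kt w t') := by
  rw [Set.disjoint_left]
  intro α h1 h2
  have e : sigT t k = sigT t' k := by unfold sigT; rw [htake]
  have ha := h1 k hk 0 (by omega)
  have hb := h2 k hk' 0 (by omega)
  simp only [Nat.add_zero, true_and, e] at ha hb
  exact slice_clash hw ha hb hgetD

lemma list_trichotomy : ∀ (t t' : List ℕ), t ≠ t' →
    (∃ n s, t' = t ++ n :: s) ∨ (∃ n s, t = t' ++ n :: s) ∨
    (∃ k, k < t.length ∧ k < t'.length ∧ t.take k = t'.take k ∧ t.getD k 0 ≠ t'.getD k 0) := by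
  intro t
  induction t with
  | nil =>
    intro t' h
    cases t' with
    | nil => exact absurd rfl h
    | cons b s => exact Or.inl ⟨b, s, rfl⟩
  | cons a r ih =>
    intro t' h
    cases t' with
    | nil => exact Or.inr (Or.inl ⟨a, r, rfl⟩)
    | cons b s =>
      by_cases hab : a = b
      · subst hab
        have hrs : r ≠ s := fun e => h (by rw [e])
        rcases ih s hrs with ⟨n, u, hu⟩ | ⟨n, u, hu⟩ | ⟨k, h1, h2, h3, h4⟩
        · exact Or.inl ⟨n, u, by rw [hu]; rfl⟩
        · exact Or.inr (Or.inl ⟨n, u, by rw [hu]; rfl⟩)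
        · refine Or.inr (Or.inr ⟨k + 1, by simpa using h1, by simpa using h2, ?_, ?_⟩)
          · simp [List.take_succ_cons, h3]
          · simpa using h4
      · exact Or.inr (Or.inr ⟨0, by simp, by simp, by simp, by simpa using hab⟩)

lemma Htilde_subset_Keps {w : ℕ → List Bool} {t : List ℕ} :
    Htilde w t ⊆ Keps w t false := fun _ h => h.1

lemma At_subset_Kt {w : ℕ → List Bool} {t : List ℕ} :
    Htilde w t ∪ phiT t '' Htilde w t ⊆ Kt w t := by
  rintro β (h | ⟨α, hα, rfl⟩)
  · exact h.1.1
  · exact phiT_mem_Kt hα.1.1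

lemma prefix_disj {w : ℕ → List Bool} (t : List ℕ) (n : ℕ) (s : List ℕ) :
    Disjoint (Htilde w t ∪ phiT t '' Htilde w t)
      (Htilde w (t ++ n :: s) ∪ phiT (t ++ n :: s) '' Htilde w (t ++ n :: s)) := by
  rw [Set.disjoint_left]
  intro β h1 h2
  have hβK : β ∈ Kt w (t ++ [n]) := by
    have : β ∈ Kt w (t ++ n :: s) := At_subset_Kt h2
    have e : t ++ n :: s = (t ++ [n]) ++ s := by simp
    rw [e] at this
    exact Kt_append _ _ this
  have hc := mem_Kt_append_flipcoord hβK
  rcases h1 with hH | ⟨α, hα, rfl⟩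
  · rcases hE : (w n).getD 0 false with _ | _
    · exact hH.2 (Or.inl (Set.mem_biUnion hE hβK))
    · rw [hE] at hc
      rw [hH.1.2] at hc
      exact Bool.false_ne_true hc
  · rcases hE : (w n).getD 0 false with _ | _
    · rw [hE] at hc
      rw [phiT, if_pos rfl, hα.1.2] at hc
      simp at hc
    · exact hα.2 (Or.inr (Set.mem_biUnion hE hβK))

lemma Ht_subset_Htilde {w : ℕ → List Bool} (hw : ∀ n, (w n).length = n + 1)
    (t : List ℕ) : Ht w t ⊆ Htilde w t := by
  rintro α ⟨hK, hinf⟩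
  refine ⟨hK, ?_⟩
  rintro (h | h)
  · obtain ⟨n, hn, hmem⟩ := Set.mem_iUnion₂.mp h
    obtain ⟨p, hp, htrue⟩ := hinf (n + 2)
    have := mem_Kt_append_fin hw hmem hp
    rw [htrue] at this
    simp at this
  · obtain ⟨n, hn, hmem⟩ := Set.mem_iUnion₂.mp h
    obtain ⟨p, hp, htrue⟩ := hinf (n + 2)
    have hfin := mem_Kt_append_fin hw (Set.mem_preimage.mp hmem) hp
    have hne : pairN (sigT t t.length) p ≠ pairN (sigT t t.length) 0 := by
      intro e; have := (pairN_inj e).2; omega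
    rw [phiT_apply_ne hne, htrue] at hfin
    simp at hfin


/-- the sets `H̃_t ∪ φ_t[H̃_t]` are pairwise disjoint, `H_t ⊆ H̃_t`,
and `⋃_t Gr(φ_t|_{H̃_t})` is the graph of a partial injection on `2^ω`. -/
theorem stmt19 (w : ℕ → List Bool) (hw : ∀ n, (w n).length = n + 1) :
    (∀ t t' : List ℕ, t ≠ t' →
      Disjoint (Htilde w t ∪ phiT t '' Htilde w t)
        (Htilde w t' ∪ phiT t' '' Htilde w t')) ∧
    (∀ t : List ℕ, Ht w t ⊆ Htilde w t) ∧
    (∀ x x' y : ℕ → Bool, (∃ t, x ∈ Htilde w t ∧ y = phiT t x) →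
      (∃ t, x' ∈ Htilde w t ∧ y = phiT t x') → x = x') ∧
    (∀ x y y' : ℕ → Bool, (∃ t, x ∈ Htilde w t ∧ y = phiT t x) →
      (∃ t, x ∈ Htilde w t ∧ y' = phiT t x) → y = y') := by
  have disj : ∀ t t' : List ℕ, t ≠ t' →
      Disjoint (Htilde w t ∪ phiT t '' Htilde w t)
        (Htilde w t' ∪ phiT t' '' Htilde w t') := by
    intro t t' hne
    rcases list_trichotomy t t' hne with ⟨n, s, hs⟩ | ⟨n, s, hs⟩ | ⟨k, h1, h2, h3, h4⟩
    · rw [hs]; exact prefix_disj t n s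
    · rw [hs]; exact (prefix_disj t' n s).symm
    · exact Set.disjoint_of_subset At_subset_Kt At_subset_Kt (Kt_incomp hw h1 h2 h3 h4)
  refine ⟨disj, Ht_subset_Htilde hw, ?_, ?_⟩
  · rintro x x' y ⟨t, hx, rfl⟩ ⟨t', hx', he⟩
    by_cases hne : t = t'
    · subst hne
      have := congrArg (phiT t) he
      rwa [phiT_invol, phiT_invol] at this
    · exfalso
      have hy1 : phiT t x ∈ Htilde w t ∪ phiT t '' Htilde w t :=
        Or.inr ⟨x, hx, rfl⟩
      have hy2 : phiT t x ∈ Htilde w t' ∪ phiT t' '' Htilde w t' :=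
        Or.inr ⟨x', hx', he.symm⟩
      exact Set.disjoint_left.mp (disj t t' hne) hy1 hy2
  · rintro x y y' ⟨t, hx, rfl⟩ ⟨t', hx', rfl⟩
    by_cases hne : t = t'
    · rw [hne]
    · exfalso
      exact Set.disjoint_left.mp (disj t t' hne) (Or.inl hx) (Or.inl hx')
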